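/- Let β : [0,1] → [0,1] be continuous and strictly increasing with β(0)=0, β(1)=1, and suppose β(α) = α holds only for α in a finite set {0 = α₀ < α₁ < … < α_m = 1}. If Λ : [0,1] → ℝ is continuous and satisfies Λ(β(α)) = Λ(α) for all α ∈ [0,1], then Λ is constant on [0,1]. -/

import Mathlib

open Filter Topology

/-- If `Λ` is continuous within `U` at `p`, the within-filter is nontrivial,
and `Λ` is constantly `c` on `U`, then `Λ p = c`. -/
lemma lim_const_aux {Λ : ℝ → ℝ} {U : Set ℝ} {p c : ℝ}
    (hc : ContinuousWithinAt Λ U p) (hne : (𝓝[U] p).NeBot)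
    (h : ∀ y ∈ U, Λ y = c) : Λ p = c := by
  have h1 : Tendsto Λ (𝓝[U] p) (𝓝 (Λ p)) := hc
  have h2 : Tendsto Λ (𝓝[U] p) (𝓝 c) := by
    refine Tendsto.congr' ?_ tendsto_const_nhds
    filter_upwards [self_mem_nhdsWithin] with y hy
    exact (h y hy).symm
  exact tendsto_nhds_unique h1 h2

/-- Orbit lemma: iterating `β` from `x` converges to a fixed point `L` with
`Λ L = Λ x`, with suitable location bounds. -/
lemma orbit_lemma (β Λ : ℝ → ℝ)
    (hmaps : Set.MapsTo β (Set.Icc 0 1) (Set.Icc 0 1))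
    (hcont : ContinuousOn β (Set.Icc 0 1))
    (hmono : StrictMonoOn β (Set.Icc 0 1))
    (hΛcont : ContinuousOn Λ (Set.Icc 0 1))
    (hΛeq : ∀ α ∈ Set.Icc (0:ℝ) 1, Λ (β α) = Λ α)
    (x : ℝ) (hx : x ∈ Set.Icc (0:ℝ) 1) :
    ∃ L ∈ Set.Icc (0:ℝ) 1, β L = L ∧ Λ L = Λ x ∧
      (x ≤ β x → x ≤ L ∧ ∀ u ∈ Set.Icc (0:ℝ) 1, β u = u → x ≤ u → L ≤ u) ∧
      (β x ≤ x → L ≤ x) := by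
  by_cases hfx : β x = x
  · exact ⟨x, hx, hfx, rfl, fun _ => ⟨le_refl x, fun u _ _ h => h⟩, fun _ => le_refl x⟩
  set f : ℕ → ℝ := fun n => β^[n] x with hf
  have hfm : ∀ n, f n ∈ Set.Icc (0:ℝ) 1 := by
    intro n
    induction n with
    | zero => simpa [hf] using hx
    | succ n ih =>
      have : f (n+1) = β (f n) := Function.iterate_succ_apply' β n x
      rw [this]; exact hmaps ih
  have hfs : ∀ n, f (n+1) = β (f n) := fun n => Function.iterate_succ_apply' β n x
  have hΛf : ∀ n, Λ (f n) = Λ x := by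
    intro n
    induction n with
    | zero => simp [hf]
    | succ n ih => rw [hfs n, hΛeq (f n) (hfm n)]; exact ih
  have hmono' := hmono.monotoneOn
  rcases le_total x (β x) with h1 | h1
  · -- increasing orbit
    have hstep : ∀ n, f n ≤ f (n+1) := by
      intro n
      induction n with
      | zero => rw [hfs 0]; simpa [hf] using h1
      | succ n ih =>
        rw [hfs (n+1)]
        calc f (n+1) = β (f n) := hfs n
          _ ≤ β (f (n+1)) := hmono' (hfm n) (hfm (n+1)) ih
    have hfmono : Monotone f := monotone_nat_of_le_succ hstep
    have hbdd : BddAbove (Set.range f) := ⟨1, by rintro y ⟨n, rfl⟩; exact (hfm n).2⟩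
    set L := ⨆ n, f n with hLdef
    have hL : Tendsto f atTop (𝓝 L) := tendsto_atTop_ciSup hfmono hbdd
    have hLx : x ≤ L := by
      have := le_ciSup hbdd 0
      simpa [hf] using this
    have hLmem : L ∈ Set.Icc (0:ℝ) 1 :=
      ⟨le_trans (hfm 0).1 (le_ciSup hbdd 0), ciSup_le fun n => (hfm n).2⟩
    have h2 : Tendsto f atTop (𝓝[Set.Icc (0:ℝ) 1] L) :=
      tendsto_nhdsWithin_of_tendsto_nhds_of_eventually_within f hL (Eventually.of_forall hfm)
    have hLfix : β L = L := by
      have h3 : Tendsto (fun n => β (f n)) atTop (𝓝 (β L)) := (hcont L hLmem).tendsto.comp h2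
      have h4 : Tendsto (fun n => f (n+1)) atTop (𝓝 L) := hL.comp (tendsto_add_atTop_nat 1)
      have h5 : Tendsto (fun n => β (f n)) atTop (𝓝 L) := by
        refine h4.congr fun n => ?_
        exact hfs n
      exact tendsto_nhds_unique h3 h5
    have hΛL : Λ L = Λ x := by
      have h3 : Tendsto (fun n => Λ (f n)) atTop (𝓝 (Λ L)) := (hΛcont L hLmem).tendsto.comp h2
      have h4 : Tendsto (fun n => Λ (f n)) atTop (𝓝 (Λ x)) := by
        refine Tendsto.congr (fun n => (hΛf n).symm) tendsto_const_nhds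
      exact tendsto_nhds_unique h3 h4
    refine ⟨L, hLmem, hLfix, hΛL, fun _ => ⟨hLx, ?_⟩, fun h2' => ?_⟩
    · intro u hu hfu hxu
      have hub : ∀ n, f n ≤ u := by
        intro n
        induction n with
        | zero => simpa [hf] using hxu
        | succ n ih =>
          rw [hfs n]
          calc β (f n) ≤ β u := hmono' (hfm n) hu ih
            _ = u := hfu
      exact ciSup_le hub
    · exact absurd (le_antisymm h2' h1) hfx
  · -- decreasing orbit
    have hstep : ∀ n, f (n+1) ≤ f n := by
      intro n
      induction n with
      | zero => rw [hfs 0]; simpa [hf] using h1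
      | succ n ih =>
        rw [hfs (n+1)]
        calc β (f (n+1)) ≤ β (f n) := hmono' (hfm (n+1)) (hfm n) ih
          _ = f (n+1) := (hfs n).symm
    have hfanti : Antitone f := antitone_nat_of_succ_le hstep
    have hbdd : BddBelow (Set.range f) := ⟨0, by rintro y ⟨n, rfl⟩; exact (hfm n).1⟩
    set L := ⨅ n, f n with hLdef
    have hL : Tendsto f atTop (𝓝 L) := tendsto_atTop_ciInf hfanti hbdd
    have hLx : L ≤ x := by
      have := ciInf_le hbdd 0
      simpa [hf] using this
    have hLmem : L ∈ Set.Icc (0:ℝ) 1 :=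
      ⟨le_ciInf fun n => (hfm n).1, le_trans (ciInf_le hbdd 0) (hfm 0).2⟩
    have h2 : Tendsto f atTop (𝓝[Set.Icc (0:ℝ) 1] L) :=
      tendsto_nhdsWithin_of_tendsto_nhds_of_eventually_within f hL (Eventually.of_forall hfm)
    have hLfix : β L = L := by
      have h3 : Tendsto (fun n => β (f n)) atTop (𝓝 (β L)) := (hcont L hLmem).tendsto.comp h2
      have h4 : Tendsto (fun n => f (n+1)) atTop (𝓝 L) := hL.comp (tendsto_add_atTop_nat 1)
      have h5 : Tendsto (fun n => β (f n)) atTop (𝓝 L) := by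
        refine h4.congr fun n => ?_
        exact hfs n
      exact tendsto_nhds_unique h3 h5
    have hΛL : Λ L = Λ x := by
      have h3 : Tendsto (fun n => Λ (f n)) atTop (𝓝 (Λ L)) := (hΛcont L hLmem).tendsto.comp h2
      have h4 : Tendsto (fun n => Λ (f n)) atTop (𝓝 (Λ x)) := by
        refine Tendsto.congr (fun n => (hΛf n).symm) tendsto_const_nhds
      exact tendsto_nhds_unique h3 h4
    refine ⟨L, hLmem, hLfix, hΛL, fun h2' => absurd (le_antisymm h1 h2') hfx, fun _ => hLx⟩

theorem stmt_3 (β : ℝ → ℝ) (Λ : ℝ → ℝ)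
    (hmaps : Set.MapsTo β (Set.Icc 0 1) (Set.Icc 0 1))
    (hcont : ContinuousOn β (Set.Icc 0 1))
    (hmono : StrictMonoOn β (Set.Icc 0 1))
    (hβ0 : β 0 = 0) (hβ1 : β 1 = 1)
    (hfix : {α ∈ Set.Icc (0:ℝ) 1 | β α = α}.Finite)
    (hΛcont : ContinuousOn Λ (Set.Icc 0 1))
    (hΛeq : ∀ α ∈ Set.Icc (0:ℝ) 1, Λ (β α) = Λ α) :
    ∀ a ∈ Set.Icc (0:ℝ) 1, ∀ b ∈ Set.Icc (0:ℝ) 1, Λ a = Λ b := by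
  intro a ha b hb
  suffices h : ∀ x ∈ Set.Icc (0:ℝ) 1, Λ x = Λ 0 by rw [h a ha, h b hb]
  set S := {x | x ∈ Set.Icc (0:ℝ) 1 ∧ ∀ y ∈ Set.Icc 0 x, Λ y = Λ 0} with hS
  have h0S : (0:ℝ) ∈ S := by
    refine ⟨⟨le_refl 0, zero_le_one⟩, fun y hy => ?_⟩
    have : y = 0 := le_antisymm hy.2 hy.1
    rw [this]
  have hSbdd : BddAbove S := ⟨1, fun x hx => hx.1.2⟩
  set s := sSup S with hs
  have hs0 : 0 ≤ s := le_csSup hSbdd h0S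
  have hs1 : s ≤ 1 := csSup_le ⟨0, h0S⟩ fun x hx => hx.1.2
  have hsmem : s ∈ Set.Icc (0:ℝ) 1 := ⟨hs0, hs1⟩
  have hlt : ∀ y, 0 ≤ y → y < s → Λ y = Λ 0 := by
    intro y hy0 hys
    obtain ⟨w, hwS, hyw⟩ := exists_lt_of_lt_csSup ⟨0, h0S⟩ hys
    exact hwS.2 y ⟨hy0, hyw.le⟩
  have hsconst : ∀ y ∈ Set.Icc 0 s, Λ y = Λ 0 := by
    intro y hy
    rcases lt_or_eq_of_le hy.2 with h' | h'
    · exact hlt y hy.1 h'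
    · rw [h']
      rcases eq_or_lt_of_le hs0 with h0 | h0
      · rw [← h0]
      · have hU : Set.Ico (0:ℝ) s ⊆ Set.Icc (0:ℝ) 1 :=
          fun z hz => ⟨hz.1, le_trans hz.2.le hs1⟩
        have hne : (𝓝[Set.Ico (0:ℝ) s] s).NeBot := by
          refine mem_closure_iff_nhdsWithin_neBot.mp ?_
          rw [closure_Ico h0.ne]
          exact ⟨hs0, le_refl s⟩
        exact lim_const_aux ((hΛcont s hsmem).mono hU) hne
          (fun z hz => hlt z hz.1 hz.2)
  suffices hseq : s = 1 by
    intro x hx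
    exact hsconst x (by rw [hseq]; exact hx)
  by_contra hne1
  have hslt : s < 1 := lt_of_le_of_ne hs1 hne1
  set T := {u | (u ∈ Set.Icc (0:ℝ) 1 ∧ β u = u) ∧ s < u} with hT
  have hTfin : T.Finite := hfix.subset (fun u hu => hu.1)
  have hTne : T.Nonempty := ⟨1, ⟨⟨zero_le_one, le_refl 1⟩, hβ1⟩, hslt⟩
  obtain ⟨t, htT, htmin⟩ : ∃ t ∈ T, ∀ u ∈ T, t ≤ u := by
    obtain ⟨t, htT, hmin⟩ : ∃ t ∈ T, ∀ u ∈ T, id u ≤ id t → id t = id u := by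
      obtain ⟨t, htT, hm⟩ := Set.Finite.exists_minimalFor id T hTfin hTne
      exact ⟨t, htT, fun u hu h => le_antisymm (hm hu h) h⟩
    exact ⟨t, htT, fun u hu => by
      by_contra hc
      push_neg at hc
      exact absurd (hmin u hu hc.le) (ne_of_gt hc)⟩
  have hst : s < t := htT.2
  have htmem : t ∈ Set.Icc (0:ℝ) 1 := htT.1.1
  have htfix : β t = t := htT.1.2
  have hnofix : ∀ p ∈ Set.Ioo s t, β p ≠ p := by
    intro p hp hfp
    have hpmem : p ∈ Set.Icc (0:ℝ) 1 :=
      ⟨le_trans hs0 hp.1.le, le_trans hp.2.le htmem.2⟩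
    exact absurd (htmin p ⟨⟨hpmem, hfp⟩, hp.1⟩) (not_le.mpr hp.2)
  have hIoo_sub : Set.Ioo s t ⊆ Set.Icc (0:ℝ) 1 :=
    fun z hz => ⟨le_trans hs0 hz.1.le, le_trans hz.2.le htmem.2⟩
  have hsign : (∀ x ∈ Set.Ioo s t, x ≤ β x) ∨ (∀ x ∈ Set.Ioo s t, β x ≤ x) := by
    by_contra hc
    push_neg at hc
    obtain ⟨⟨x₁, hx₁, h1⟩, ⟨x₂, hx₂, h2⟩⟩ := hc
    have huIcc : Set.uIcc x₁ x₂ ⊆ Set.Ioo s t :=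
      Set.OrdConnected.uIcc_subset Set.ordConnected_Ioo hx₁ hx₂
    have hg : ContinuousOn (fun y => β y - y) (Set.uIcc x₁ x₂) :=
      (hcont.mono (huIcc.trans hIoo_sub)).sub continuousOn_id
    have h0mem : (0:ℝ) ∈ Set.uIcc (β x₁ - x₁) (β x₂ - x₂) := by
      rw [Set.mem_uIcc]
      left
      constructor <;> linarith
    obtain ⟨c, hc1, hc2⟩ := intermediate_value_uIcc hg h0mem
    have hc2' : β c - c = 0 := hc2
    have : β c = c := by linarith
    exact hnofix c (huIcc hc1) this
  have hΛt : Λ t = Λ 0 ∧ ∀ x ∈ Set.Ioo s t, Λ x = Λ 0 := by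
    rcases hsign with hup | hdown
    · have hval : ∀ x ∈ Set.Ioo s t, Λ x = Λ t := by
        intro x hx
        obtain ⟨L, hLmem, hLfix, hΛL, hu, _⟩ :=
          orbit_lemma β Λ hmaps hcont hmono hΛcont hΛeq x (hIoo_sub hx)
        obtain ⟨hxL, hbound⟩ := hu (hup x hx)
        have hLt : L ≤ t := hbound t htmem htfix hx.2.le
        have hLeq : L = t := by
          rcases lt_or_eq_of_le hLt with h' | h'
          · exact absurd hLfix (hnofix L ⟨lt_of_lt_of_le hx.1 hxL, h'⟩)
          · exact h'
        rw [← hΛL, hLeq]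
      have hne : (𝓝[Set.Ioo s t] s).NeBot := by
        refine mem_closure_iff_nhdsWithin_neBot.mp ?_
        rw [closure_Ioo hst.ne]
        exact ⟨le_refl s, hst.le⟩
      have hst' : Λ s = Λ t :=
        lim_const_aux ((hΛcont s hsmem).mono hIoo_sub) hne hval
      have ht0 : Λ t = Λ 0 := by
        rw [← hst']
        exact hsconst s ⟨hs0, le_refl s⟩
      exact ⟨ht0, fun x hx => (hval x hx).trans ht0⟩
    · have hval : ∀ x ∈ Set.Ioo s t, Λ x = Λ 0 := by
        intro x hx
        obtain ⟨L, hLmem, hLfix, hΛL, _, hd⟩ :=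
          orbit_lemma β Λ hmaps hcont hmono hΛcont hΛeq x (hIoo_sub hx)
        have hLx : L ≤ x := hd (hdown x hx)
        have hLs : L ≤ s := by
          by_contra h'
          push_neg at h'
          exact hnofix L ⟨h', lt_of_le_of_lt hLx hx.2⟩ hLfix
        rw [← hΛL]
        exact hsconst L ⟨hLmem.1, hLs⟩
      have hne : (𝓝[Set.Ioo s t] t).NeBot := by
        refine mem_closure_iff_nhdsWithin_neBot.mp ?_
        rw [closure_Ioo hst.ne]
        exact ⟨hst.le, le_refl t⟩
      exact ⟨lim_const_aux ((hΛcont t htmem).mono hIoo_sub) hne hval, hval⟩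
  have htS : t ∈ S := by
    refine ⟨htmem, fun y hy => ?_⟩
    rcases le_or_gt y s with h' | h'
    · exact hsconst y ⟨hy.1, h'⟩
    · rcases lt_or_eq_of_le hy.2 with h'' | h''
      · exact hΛt.2 y ⟨h', h''⟩
      · rw [h'']; exact hΛt.1
  exact absurd (le_csSup hSbdd htS) (not_le.mpr hst)
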